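/- Let M and M̂ be as in the single-component specialization construction. Then the multiset of complex roots (with multiplicity) of the characteristic polynomial of M̂ equals the multiset of complex roots of the characteristic polynomial of M together with (y·w − 1) copies of the multiset of complex roots of the characteristic polynomial of Z; i.e., σ(M̂) = σ(M) ∪ σ(Z)^{y·w − 1} as multisets of eigenvalues. -/

import Mathlib

open Matrix

/-- The single-component specialization `M̂` of the block matrix `M = [[U, ΣY_i],[ΣW_j, Z]]`:
indices `B ⊕ (P × C)` with `P = Fin y × Fin w`; its `(B,B)` block is `U`, its
`(B, {(i,j)}×C)` block is `Y i`, its `({(i,j)}×C, B)` block is `W j`, its diagonal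
`({(i,j)}×C, {(i,j)}×C)` blocks are `Z`, and all blocks between distinct copies are zero. -/
def specialization {l m y w : ℕ}
    (U : Matrix (Fin l) (Fin l) ℝ) (Z : Matrix (Fin m) (Fin m) ℝ)
    (Y : Fin y → Matrix (Fin l) (Fin m) ℝ) (W : Fin w → Matrix (Fin m) (Fin l) ℝ) :
    Matrix (Fin l ⊕ ((Fin y × Fin w) × Fin m)) (Fin l ⊕ ((Fin y × Fin w) × Fin m)) ℝ :=
  fun r c =>
    match r, c with
    | Sum.inl a, Sum.inl b => U a b
    | Sum.inl a, Sum.inr ((i, _), c') => Y i a c'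
    | Sum.inr ((_, j), r'), Sum.inl b => W j r' b
    | Sum.inr (p, r'), Sum.inr (q, c') => if p = q then Z r' c' else 0

/-- The original block matrix `M = [[U, Y],[W, Z]]` with `Y = ΣY_i`, `W = ΣW_j`. -/
def origMatrix {l m y w : ℕ}
    (U : Matrix (Fin l) (Fin l) ℝ) (Z : Matrix (Fin m) (Fin m) ℝ)
    (Y : Fin y → Matrix (Fin l) (Fin m) ℝ) (W : Fin w → Matrix (Fin m) (Fin l) ℝ) :
    Matrix (Fin l ⊕ Fin m) (Fin l ⊕ Fin m) ℝ :=
  Matrix.fromBlocks U (∑ i, Y i) (∑ j, W j) Z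

section helpers
open Polynomial


lemma charmatrix_blockDiagonal' {R : Type*} [CommRing R] {m : Type*} [Fintype m] [DecidableEq m]
    {P : Type*} [Fintype P] [DecidableEq P] (Z : Matrix m m R) :
    charmatrix (blockDiagonal fun _ : P => Z) = blockDiagonal fun _ : P => charmatrix Z := by
  ext ⟨r, p⟩ ⟨c, q⟩
  by_cases h : p = q
  · subst h
    by_cases h2 : r = c
    · subst h2; simp [blockDiagonal_apply]
    · rw [charmatrix_apply_ne _ _ _ (by simp [Prod.ext_iff, h2])]
      simp [blockDiagonal_apply, charmatrix_apply_ne _ _ _ h2]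
  · rw [charmatrix_apply_ne _ _ _ (by simp [Prod.ext_iff, h])]
    simp [blockDiagonal_apply, h]

lemma key_product' {R : Type*} [CommRing R] {l m P : Type*}
    [Fintype l] [Fintype m] [Fintype P] [DecidableEq l] [DecidableEq m] [DecidableEq P]
    (A : P → Matrix l m R) (B : P → Matrix m l R) (E : Matrix m m R) :
    (Matrix.of fun a (pc : P × m) => A pc.1 a pc.2)
        * (reindex (Equiv.prodComm m P) (Equiv.prodComm m P) (blockDiagonal fun _ : P => E))
        * (Matrix.of fun (pr : P × m) b => B pr.1 pr.2 b)
      = ∑ p, A p * E * B p := by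
  classical
  have h1 : (Matrix.of fun a (pc : P × m) => A pc.1 a pc.2)
      * (reindex (Equiv.prodComm m P) (Equiv.prodComm m P) (blockDiagonal fun _ : P => E))
      = Matrix.of (fun a (qc : P × m) => (A qc.1 * E) a qc.2) := by
    ext a ⟨q, c⟩
    simp only [mul_apply, Fintype.sum_prod_type, reindex_apply, submatrix_apply,
      Equiv.prodComm_symm, Equiv.prodComm_apply, Prod.swap_prod_mk, blockDiagonal_apply,
      Matrix.of_apply, mul_ite, mul_zero]
    rw [Finset.sum_eq_single q (fun p _ hp => by simp [hp]) (by simp)]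
    simp [mul_apply]
  rw [h1]
  ext a b
  simp [mul_apply, Matrix.sum_apply, Fintype.sum_prod_type]

set_option maxHeartbeats 1000000 in
theorem charpoly_spec_aux {l m y w : ℕ} (hyw : 1 ≤ y * w)
    (U : Matrix (Fin l) (Fin l) ℝ) (Z : Matrix (Fin m) (Fin m) ℝ)
    (Y : Fin y → Matrix (Fin l) (Fin m) ℝ) (W : Fin w → Matrix (Fin m) (Fin l) ℝ)
    (S : Matrix (Fin l ⊕ ((Fin y × Fin w) × Fin m)) (Fin l ⊕ ((Fin y × Fin w) × Fin m)) ℝ)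
    (hsp : S = fun r c =>
      match r, c with
      | Sum.inl a, Sum.inl b => U a b
      | Sum.inl a, Sum.inr ((i, _), c') => Y i a c'
      | Sum.inr ((_, j), r'), Sum.inl b => W j r' b
      | Sum.inr (p, r'), Sum.inr (q, c') => if p = q then Z r' c' else 0)
    (M : Matrix (Fin l ⊕ Fin m) (Fin l ⊕ Fin m) ℝ)
    (horg : M = Matrix.fromBlocks U (∑ i, Y i) (∑ j, W j) Z) :
    S.charpoly = M.charpoly * Z.charpoly ^ (y * w - 1) := by
  classical
  let F := FractionRing (Polynomial ℝ)
  let φ : Polynomial ℝ →+* F := algebraMap (Polynomial ℝ) F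
  have hφ : Function.Injective φ := IsFractionRing.injective (Polynomial ℝ) F
  apply hφ
  let ψ : ℝ →+* F := φ.comp Polynomial.C
  let e : (Fin m × (Fin y × Fin w)) ≃ ((Fin y × Fin w) × Fin m) := Equiv.prodComm _ _
  let Yb : Matrix (Fin l) ((Fin y × Fin w) × Fin m) ℝ := Matrix.of fun a pc => Y pc.1.1 a pc.2
  let Wb : Matrix ((Fin y × Fin w) × Fin m) (Fin l) ℝ := Matrix.of fun pr b => W pr.1.2 pr.2 b
  have hspec : S = fromBlocks U Yb Wb
      (reindex e e (blockDiagonal fun _ : Fin y × Fin w => Z)) := by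
    rw [hsp]
    ext i j
    rcases i with a | ⟨⟨p1, p2⟩, r⟩ <;> rcases j with b | ⟨⟨q1, q2⟩, c⟩ <;>
      simp [fromBlocks, blockDiagonal_apply, Yb, Wb, e, Prod.ext_iff]
  -- the mapped Z-charmatrix and its inverse
  have hdz : ((charmatrix Z).map φ).det = φ Z.charpoly := by
    rw [Matrix.charpoly, RingHom.map_det, RingHom.mapMatrix_apply]
  have hdzu : IsUnit ((charmatrix Z).map φ).det := by
    rw [hdz, isUnit_iff_ne_zero]
    exact fun h0 => (Matrix.charpoly_monic Z).ne_zero (hφ (by simpa using h0))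
  haveI : Invertible ((charmatrix Z).map ⇑φ) := Matrix.invertibleOfIsUnitDet _ hdzu
  -- the big diagonal block
  have hDFE : (reindex e e (blockDiagonal fun _ : Fin y × Fin w => (charmatrix Z).map φ))
      * (reindex e e (blockDiagonal fun _ : Fin y × Fin w => ((charmatrix Z).map φ)⁻¹)) = 1 := by
    rw [reindex_apply, reindex_apply, submatrix_mul_equiv, ← blockDiagonal_mul]
    simp only [Matrix.mul_nonsing_inv _ hdzu]
    rw [show (fun _ : Fin y × Fin w => (1 : Matrix (Fin m) (Fin m) F)) = (1 : _) from rfl,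
      blockDiagonal_one, submatrix_one_equiv]
  have hdetDF : (reindex e e (blockDiagonal fun _ : Fin y × Fin w => (charmatrix Z).map φ)).det
      = ((charmatrix Z).map φ).det ^ (y * w) := by
    rw [reindex_apply, det_submatrix_equiv_self, det_blockDiagonal]
    simp [Finset.prod_const, Finset.card_univ]
  haveI : Invertible (reindex e e (blockDiagonal fun _ : Fin y × Fin w => (charmatrix Z).map ⇑φ)) :=
    Matrix.invertibleOfIsUnitDet _ (by rw [hdetDF]; exact hdzu.pow _)
  have hDFinv : (reindex e e (blockDiagonal fun _ : Fin y × Fin w => (charmatrix Z).map φ))⁻¹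
      = reindex e e (blockDiagonal fun _ : Fin y × Fin w => ((charmatrix Z).map φ)⁻¹) :=
    inv_eq_right_inv hDFE
  -- charmatrix of the specialization, mapped to F
  have hYb : (-(Yb.map ⇑Polynomial.C)).map ⇑φ = -(Yb.map ⇑ψ) := by
    ext a pc; simp [Matrix.map_apply, ψ]
  have hWb : (-(Wb.map ⇑Polynomial.C)).map ⇑φ = -(Wb.map ⇑ψ) := by
    ext pr b; simp [Matrix.map_apply, ψ]
  have hDblock : ((charmatrix (reindex e e (blockDiagonal fun _ : Fin y × Fin w => Z))).map ⇑φ)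
      = reindex e e (blockDiagonal fun _ : Fin y × Fin w => (charmatrix Z).map φ) := by
    rw [charmatrix_reindex, reindex_apply, reindex_apply, ← submatrix_map,
      charmatrix_blockDiagonal', blockDiagonal_map _ _ (map_zero φ)]
  have hmapchar : (charmatrix S).map ⇑φ
      = fromBlocks ((charmatrix U).map ⇑φ) (-(Yb.map ⇑ψ)) (-(Wb.map ⇑ψ))
          (reindex e e (blockDiagonal fun _ : Fin y × Fin w => (charmatrix Z).map φ)) := by
    rw [hspec, charmatrix_fromBlocks, fromBlocks_map, hYb, hWb, hDblock]
  -- Schur complement computation for the specialization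
  have hkey : (-(Yb.map ⇑ψ))
        * (reindex e e (blockDiagonal fun _ : Fin y × Fin w => (charmatrix Z).map φ))⁻¹
        * (-(Wb.map ⇑ψ))
      = ((∑ i, Y i).map ⇑ψ) * ((charmatrix Z).map φ)⁻¹ * ((∑ j, W j).map ⇑ψ) := by
    simp only [Matrix.neg_mul, Matrix.mul_neg, _root_.neg_neg]
    rw [hDFinv]
    have h1 : Yb.map ⇑ψ
        = Matrix.of fun a (pc : (Fin y × Fin w) × Fin m) => ((Y pc.1.1).map ⇑ψ) a pc.2 := rfl
    have h2 : Wb.map ⇑ψ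
        = Matrix.of fun (pr : (Fin y × Fin w) × Fin m) b => ((W pr.1.2).map ⇑ψ) pr.2 b := rfl
    rw [h1, h2, key_product' (fun p : Fin y × Fin w => (Y p.1).map ⇑ψ)
      (fun p : Fin y × Fin w => (W p.2).map ⇑ψ) (((charmatrix Z).map φ)⁻¹)]
    have h3 : (∑ i, (Y i).map ⇑ψ) = ((∑ i, Y i).map ⇑ψ) := by
      ext a c; simp [Matrix.map_apply, Matrix.sum_apply]
    have h4 : (∑ j, (W j).map ⇑ψ) = ((∑ j, W j).map ⇑ψ) := by
      ext c b; simp [Matrix.map_apply, Matrix.sum_apply]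
    rw [Fintype.sum_prod_type, ← h3, ← h4]
    simp only [Matrix.sum_mul, Matrix.mul_sum]
    exact (neg_neg _).trans Finset.sum_comm
  -- now compute both charpolys
  have hS : φ S.charpoly
      = ((charmatrix Z).map φ).det ^ (y * w)
        * (((charmatrix U).map ⇑φ)
            - ((∑ i, Y i).map ⇑ψ) * ((charmatrix Z).map φ)⁻¹ * ((∑ j, W j).map ⇑ψ)).det := by
    rw [Matrix.charpoly, RingHom.map_det, RingHom.mapMatrix_apply, hmapchar,
      det_fromBlocks₂₂, invOf_eq_nonsing_inv, hkey, hdetDF]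
  have hM : φ M.charpoly
      = ((charmatrix Z).map φ).det
        * (((charmatrix U).map ⇑φ)
            - ((∑ i, Y i).map ⇑ψ) * ((charmatrix Z).map φ)⁻¹ * ((∑ j, W j).map ⇑ψ)).det := by
    have hYs : (-((∑ i, Y i).map ⇑Polynomial.C)).map ⇑φ = -((∑ i, Y i).map ⇑ψ) := by
      ext a c; simp [Matrix.map_apply, ψ]
    have hWs : (-((∑ j, W j).map ⇑Polynomial.C)).map ⇑φ = -((∑ j, W j).map ⇑ψ) := by
      ext c b; simp [Matrix.map_apply, ψ]
    rw [horg, Matrix.charpoly, RingHom.map_det, RingHom.mapMatrix_apply,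
      charmatrix_fromBlocks, fromBlocks_map, hYs, hWs, det_fromBlocks₂₂,
      invOf_eq_nonsing_inv]
    simp only [Matrix.neg_mul, Matrix.mul_neg, _root_.neg_neg]
  rw [RingHom.map_mul, RingHom.map_pow, hS, hM, ← hdz]
  have hpow : ((charmatrix Z).map φ).det ^ (y * w)
      = ((charmatrix Z).map φ).det ^ (y * w - 1) * ((charmatrix Z).map φ).det := by
    rw [← pow_succ, Nat.sub_add_cancel hyw]
  rw [hpow]
  ring

end helpers

/-- the multiset of complex eigenvalues of `M̂` equals the multiset of
complex eigenvalues of `M` together with `y·w − 1` copies of the multiset of complex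
eigenvalues of `Z`. -/
theorem spectrum_specialization
    {l m y w : ℕ} (hl : 1 ≤ l) (hm : 1 ≤ m) (hy : 1 ≤ y) (hw : 1 ≤ w)
    (U : Matrix (Fin l) (Fin l) ℝ) (Z : Matrix (Fin m) (Fin m) ℝ)
    (Y : Fin y → Matrix (Fin l) (Fin m) ℝ) (W : Fin w → Matrix (Fin m) (Fin l) ℝ) :
    (Matrix.charpoly ((specialization U Z Y W).map Complex.ofReal)).roots
      = (Matrix.charpoly ((origMatrix U Z Y W).map Complex.ofReal)).roots
        + (y * w - 1) • (Matrix.charpoly (Z.map Complex.ofReal)).roots := by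
  have hyw : 1 ≤ y * w := Nat.mul_le_mul hy hw
  have h := charpoly_spec_aux hyw U Z Y W (specialization U Z Y W) rfl
    (origMatrix U Z Y W) rfl
  have e1 : (Complex.ofReal : ℝ → ℂ) = ⇑Complex.ofRealHom := rfl
  have hc : ((specialization U Z Y W).map Complex.ofReal).charpoly
      = ((origMatrix U Z Y W).map Complex.ofReal).charpoly
        * ((Z.map Complex.ofReal).charpoly) ^ (y * w - 1) := by
    rw [e1, Matrix.charpoly_map, Matrix.charpoly_map, Matrix.charpoly_map, h,
      Polynomial.map_mul, Polynomial.map_pow]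
  rw [hc, Polynomial.roots_mul (mul_ne_zero (Matrix.charpoly_monic _).ne_zero
    (pow_ne_zero _ (Matrix.charpoly_monic _).ne_zero)), Polynomial.roots_pow]
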